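/- Every right-closing cellular automaton on A^{Σ*} is preinjective. -/

import Mathlib

open Function

variable {Sig A : Type*}

/-- Configurations over the tree `Sig*`: maps from the free monoid (lists) to `A`. -/
abbrev Config (Sig A : Type*) := List Sig → A

/-- Shift action: `(shift f v) w = f (v ++ w)`. -/
def shift (f : Config Sig A) (v : List Sig) : Config Sig A := fun w => f (v ++ w)

/-- `Delta Sig n` is the set of words of length `< n` (i.e. `Δ_n`). -/
def Delta (Sig : Type*) (n : ℕ) : Type _ := {w : List Sig // w.length < n}

/-- Restriction of a configuration to `Δ_n`. -/
def restrict (f : Config Sig A) (n : ℕ) : Delta Sig n → A := fun w => f w.val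

/-- The CA defined by a local map `μ` of radius `r`. -/
def caMap (r : ℕ) (μ : (Delta Sig (r + 1) → A) → A) : Config Sig A → Config Sig A :=
  fun f v => μ (restrict (shift f v) (r + 1))

/-- `τ` is a cellular automaton: it admits a radius `r ≥ 1` and a local defining map. -/
def IsCA (τ : Config Sig A → Config Sig A) : Prop :=
  ∃ r : ℕ, 1 ≤ r ∧ ∃ μ : (Delta Sig (r + 1) → A) → A,
    ∀ (f : Config Sig A) (v : List Sig), τ f v = μ (restrict (shift f v) (r + 1))

/-- A subshift: a closed, shift-invariant set of configurations. -/
def IsSubshift [TopologicalSpace A] (X : Set (Config Sig A)) : Prop :=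
  IsClosed X ∧ ∀ f ∈ X, ∀ v : List Sig, shift f v ∈ X

/-- The blocks of size `n` of `X`. -/
def blockSet (X : Set (Config Sig A)) (n : ℕ) : Set (Delta Sig n → A) :=
  {p | ∃ f ∈ X, restrict f n = p}

/-- Positive expansiveness with constant `N`. -/
def PosExpansive (τ : Config Sig A → Config Sig A) (N : ℕ) : Prop :=
  1 ≤ N ∧ ∀ f₁ f₂ : Config Sig A, f₁ ≠ f₂ →
    ∃ t : ℕ, restrict (τ^[t] f₁) N ≠ restrict (τ^[t] f₂) N

/-- The set `P(τ, n, t)` of `t`-tuples of traces on `Δ_n`. -/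
def Pset (τ : Config Sig A → Config Sig A) (n t : ℕ) : Set (Fin t → Delta Sig n → A) :=
  {s | ∃ f : Config Sig A, ∀ i : Fin t, s i = restrict (τ^[(i : ℕ)] f) n}

/-- The block `a ◁ p` on `Δ_{r+1}` with root value `a` and agreeing with `p` elsewhere. -/
def rootIns (r : ℕ) (a : A) (p : {w : List Sig // w.length < r + 1 ∧ w ≠ []} → A) :
    Delta Sig (r + 1) → A :=
  fun w => if h : w.val.length = 0 then a else
    p ⟨w.val, ⟨w.2, fun he => h (by simp [he])⟩⟩

/-- Permutivity: for every pattern on `Δ_{r+1} \ {ε}`, the induced map on root values is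
a permutation of `A`. -/
def Permutive (r : ℕ) (μ : (Delta Sig (r + 1) → A) → A) : Prop :=
  ∀ p : {w : List Sig // w.length < r + 1 ∧ w ≠ []} → A,
    Function.Bijective (fun a : A => μ (rootIns r a p))

/-- The image under the local map `μ` of a block of size `n + r`: a block of size `n`. -/
def blockImage (r n : ℕ) (μ : (Delta Sig (r + 1) → A) → A)
    (p : Delta Sig (n + r) → A) : Delta Sig n → A :=
  fun v => μ (fun w => p ⟨v.val ++ w.val, by
    have hv := v.2; have hw := w.2
    simp only [List.length_append]; omega⟩)

/-- A diamond of `(r, μ)`: two distinct blocks of size `n = m + r > 2r + 2` coinciding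
with a block `p ∈ A^{Δ_r}` on `Δ_r` and on `vΔ_r` for every `v` of length `m = n - r`,
with the same image under `μ`. -/
def HasDiamond (r : ℕ) (μ : (Delta Sig (r + 1) → A) → A) : Prop :=
  ∃ (m : ℕ) (_ : r + 2 < m) (p : Delta Sig r → A)
    (p₁ p₂ : Delta Sig (m + r) → A),
    p₁ ≠ p₂ ∧
    (∀ w : Delta Sig r,
      p₁ ⟨w.val, by have := w.2; omega⟩ = p w ∧
      p₂ ⟨w.val, by have := w.2; omega⟩ = p w) ∧
    (∀ v : List Sig, ∀ hv : v.length = m, ∀ w : Delta Sig r,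
      p₁ ⟨v ++ w.val, by have := w.2; simp only [List.length_append]; omega⟩ = p w ∧
      p₂ ⟨v ++ w.val, by have := w.2; simp only [List.length_append]; omega⟩ = p w) ∧
    blockImage r m μ p₁ = blockImage r m μ p₂

/-- Right-closingness of the CA `caMap r μ`. -/
def RightClosing (r : ℕ) (μ : (Delta Sig (r + 1) → A) → A) : Prop :=
  ∃ N : ℕ, ∀ (p : Delta Sig r → A) (q : Delta Sig (r * N) → A),
    (∃ f : Config Sig A, restrict f r = p ∧ restrict (caMap r μ f) (r * N) = q) →
    ∃! ps : {v : List Sig // v.length = r} → Delta Sig r → A,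
      ∀ f : Config Sig A, restrict f r = p → restrict (caMap r μ f) (r * N) = q →
        ∀ (v : {v : List Sig // v.length = r}) (w : Delta Sig r),
          f (v.val ++ w.val) = ps v w



lemma shift_shift' (f : Config Sig A) (v w : List Sig) :
    shift (shift f v) w = shift f (v ++ w) := by
  funext u; simp [shift, List.append_assoc]

lemma caMap_shift' (r : ℕ) (μ : (Delta Sig (r + 1) → A) → A)
    (f : Config Sig A) (v : List Sig) :
    caMap r μ (shift f v) = shift (caMap r μ f) v := by
  funext w
  show μ (restrict (shift (shift f v) w) (r + 1)) = μ (restrict (shift f (v ++ w)) (r + 1))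
  rw [shift_shift']

/-- Key lemma: right-closing implies that a configuration is determined by its
restriction to `Δ_r` together with its image. -/
lemma rc_determined (r N : ℕ) (hr : 1 ≤ r) (μ : (Delta Sig (r + 1) → A) → A)
    (hN : ∀ (p : Delta Sig r → A) (q : Delta Sig (r * N) → A),
      (∃ f : Config Sig A, restrict f r = p ∧ restrict (caMap r μ f) (r * N) = q) →
      ∃! ps : {v : List Sig // v.length = r} → Delta Sig r → A,
        ∀ f : Config Sig A, restrict f r = p → restrict (caMap r μ f) (r * N) = q →
          ∀ (v : {v : List Sig // v.length = r}) (w : Delta Sig r),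
            f (v.val ++ w.val) = ps v w)
    (f₁ f₂ : Config Sig A)
    (h0 : restrict f₁ r = restrict f₂ r)
    (hτ : caMap r μ f₁ = caMap r μ f₂) : f₁ = f₂ := by
  suffices h : ∀ L, ∀ u : List Sig, u.length = L → f₁ u = f₂ u by
    funext u; exact h _ u rfl
  intro L
  induction L using Nat.strong_induction_on with
  | _ L IH =>
  intro u hu
  by_cases hc : u.length < r
  · exact congrFun h0 ⟨u, hc⟩
  · push_neg at hc
    have hx : (u.drop (u.length - r)).length = r := by
      simp only [List.length_drop]; omega
    have hv : (u.take (u.length - r)).length = u.length - r := by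
      simp only [List.length_take]; omega
    set v := u.take (u.length - r) with hvdef
    set x := u.drop (u.length - r) with hxdef
    have hvx : v ++ x = u := List.take_append_drop _ _
    obtain ⟨ps, hps, -⟩ := hN (restrict (shift f₁ v) r)
      (restrict (caMap r μ (shift f₁ v)) (r * N)) ⟨shift f₁ v, rfl, rfl⟩
    have hnil : ([] : List Sig).length < r := by simp only [List.length_nil]; omega
    have h1 := hps (shift f₁ v) rfl rfl ⟨x, hx⟩ ⟨[], hnil⟩
    have hrest : restrict (shift f₂ v) r = restrict (shift f₁ v) r := by
      funext w
      have : (v ++ w.val).length < L := by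
        have hw := w.2
        simp only [List.length_append, hv]; omega
      exact (IH _ this (v ++ w.val) rfl).symm
    have himg : restrict (caMap r μ (shift f₂ v)) (r * N)
        = restrict (caMap r μ (shift f₁ v)) (r * N) := by
      rw [caMap_shift', caMap_shift', hτ]
    have h2 := hps (shift f₂ v) hrest himg ⟨x, hx⟩ ⟨[], hnil⟩
    have key : f₁ (v ++ (x ++ [])) = f₂ (v ++ (x ++ [])) := h1.trans h2.symm
    simpa [hvx] using key

/-- Extension of a block to a full configuration by a constant. -/
def extConfig (n : ℕ) (a : A) (p : Delta Sig n → A) : Config Sig A :=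
  fun u => if h : u.length < n then p ⟨u, h⟩ else a

/-- right-closing CA are preinjective. -/
theorem rightClosing_preinjective [Finite Sig] [Finite A] [Nonempty A]
    (r : ℕ) (hr : 1 ≤ r) (μ : (Delta Sig (r + 1) → A) → A)
    (h : RightClosing r μ) :
    ¬ HasDiamond r μ := by
  rintro ⟨m, hm, p, p₁, p₂, hne, hroot, hdeep, himg⟩
  obtain ⟨N, hN⟩ := h
  obtain ⟨a⟩ := ‹Nonempty A›
  set f₁ : Config Sig A := extConfig (m + r) a p₁ with hf₁
  set f₂ : Config Sig A := extConfig (m + r) a p₂ with hf₂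
  -- f₁ and f₂ agree on all words of length ≥ m
  have hag : ∀ u : List Sig, m ≤ u.length → f₁ u = f₂ u := by
    intro u hu
    by_cases hc : u.length < m + r
    · have hw : (u.drop m).length < r := by simp only [List.length_drop]; omega
      have hd := hdeep (u.take m) (by simp only [List.length_take]; omega) ⟨u.drop m, hw⟩
      have h12 := hd.1.trans hd.2.symm
      have hu' : u.take m ++ u.drop m = u := List.take_append_drop m u
      have e : (⟨u.take m ++ (u.drop m), by
          simp only [List.length_append, List.length_take, List.length_drop]; omega⟩ :
          Delta Sig (m + r)) = ⟨u, hc⟩ := Subtype.ext hu'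
      rw [e] at h12
      simpa [f₁, f₂, extConfig, hc] using h12
    · simp [f₁, f₂, extConfig, hc]
  have h0 : restrict f₁ r = restrict f₂ r := by
    funext w
    have hw : w.val.length < m + r := by have := w.2; omega
    have hrt := hroot w
    have h12 := hrt.1.trans hrt.2.symm
    simpa [restrict, f₁, f₂, extConfig, hw] using h12
  have hτ : caMap r μ f₁ = caMap r μ f₂ := by
    funext u
    by_cases hc : u.length < m
    · have e : ∀ (g : Delta Sig (m + r) → A),
          caMap r μ (extConfig (m + r) a g) u = blockImage r m μ g ⟨u, hc⟩ := by
        intro g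
        show μ _ = μ _
        congr 1
        funext w
        have hlen : (u ++ w.val).length < m + r := by
          have := w.2; simp only [List.length_append]; omega
        simp only [restrict, shift, extConfig]
        rw [dif_pos hlen]
      rw [hf₁, hf₂, e p₁, e p₂, himg]
    · show μ _ = μ _
      congr 1
      funext w
      exact hag (u ++ w.val) (by simp only [List.length_append]; omega)
  have heq : f₁ = f₂ := rc_determined r N hr μ hN f₁ f₂ h0 hτ
  apply hne
  funext w
  have hw := w.2
  have : f₁ w.val = f₂ w.val := by rw [heq]
  have h' : p₁ ⟨w.val, hw⟩ = p₂ ⟨w.val, hw⟩ := by simpa [f₁, f₂, extConfig, hw] using this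
  exact h'
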